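/- The improper integral ∫_{ℝ²} ( |y|^{2+2α}/4 ) e^{U(y)} f(y) dy converges and equals 2π Λ₁, where Λ₁ = −( π / ( V₀ sin(π/(1+α)) (1+α) ) ) · ( 8(1+α)²/V₀ )^{1/(1+α)}. -/

import Mathlib

open MeasureTheory Metric Real Filter

noncomputable section

/-- `ℝ²`, realized as the Euclidean space on `Fin 2`. -/
abbrev R2 : Type := EuclideanSpace ℝ (Fin 2)

/-- `a = V₀/(8(1+α)²)`. -/
def aconst (α V0 : ℝ) : ℝ := V0 / (8 * (1 + α) ^ 2)

/-- `U(y) = -2 log(1 + a|y|^{2α+2})`. -/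
def U2 (α V0 : ℝ) (y : R2) : ℝ := -2 * Real.log (1 + aconst α V0 * ‖y‖ ^ (2 * α + 2))

/-- `f(y) = (1 - a|y|^{2α+2})/(1 + a|y|^{2α+2})`. -/
def f2 (α V0 : ℝ) (y : R2) : ℝ :=
  (1 - aconst α V0 * ‖y‖ ^ (2 * α + 2)) / (1 + aconst α V0 * ‖y‖ ^ (2 * α + 2))

/-- The constant `Λ₁`. -/
def Lam1 (α V0 : ℝ) : ℝ :=
  -(π / (V0 * Real.sin (π / (1 + α)) * (1 + α))) *
    (8 * (1 + α) ^ 2 / V0) ^ ((1 : ℝ) / (1 + α))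

section Aux
open Set

lemma betaReal_val {p q : ℝ} (hp : 0 < p) (hq : 0 < q) :
    ∫ t in Ioo (0:ℝ) 1, t ^ (p-1) * (1-t) ^ (q-1)
      = Real.Gamma p * Real.Gamma q / Real.Gamma (p+q) := by
  have h1 : Complex.betaIntegral p q
      = ((∫ t in (0:ℝ)..1, t ^ (p-1) * (1-t) ^ (q-1) : ℝ) : ℂ) := by
    rw [Complex.betaIntegral, ← intervalIntegral.integral_ofReal]
    apply intervalIntegral.integral_congr
    intro x hx
    rw [uIcc_of_le zero_le_one] at hx
    have hx0 : (0:ℝ) ≤ x := hx.1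
    have hx1 : (0:ℝ) ≤ 1 - x := by linarith [hx.2]
    push_cast
    rw [Complex.ofReal_cpow hx0, Complex.ofReal_cpow hx1]
    push_cast
    ring
  have h2 := Complex.Gamma_mul_Gamma_eq_betaIntegral
    (s := (p:ℂ)) (t := (q:ℂ)) (by simpa using hp) (by simpa using hq)
  rw [h1, ← Complex.ofReal_add, Complex.Gamma_ofReal, Complex.Gamma_ofReal,
    Complex.Gamma_ofReal, ← Complex.ofReal_mul, ← Complex.ofReal_mul] at h2
  have h3 : Real.Gamma p * Real.Gamma q
      = Real.Gamma (p+q) * ∫ t in (0:ℝ)..1, t ^ (p-1) * (1-t) ^ (q-1) :=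
    mod_cast h2
  have h4 : Real.Gamma (p+q) ≠ 0 := (Real.Gamma_pos_of_pos (by linarith)).ne'
  rw [intervalIntegral.integral_of_le zero_le_one, ← integral_Ioc_eq_integral_Ioo] at *
  field_simp [h3]
  rw [h3]; ring

lemma J_meas (p q : ℝ) : Measurable (fun x : ℝ => x ^ (p-1) * (1+x) ^ (-(p+q))) := by
  fun_prop

lemma J_int {p q : ℝ} (hp : 0 < p) (hq : 0 < q) :
    IntegrableOn (fun x : ℝ => x ^ (p-1) * (1+x) ^ (-(p+q))) (Ioi 0) := by
  have hmeas : AEStronglyMeasurable (fun x : ℝ => x ^ (p-1) * (1+x) ^ (-(p+q))) volume := (J_meas p q).aestronglyMeasurable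
  rw [← Ioc_union_Ioi_eq_Ioi (zero_le_one)]
  apply IntegrableOn.union
  · have hdom : IntegrableOn (fun x : ℝ => x ^ (p-1)) (Ioc (0:ℝ) 1) :=
      (intervalIntegrable_iff_integrableOn_Ioc_of_le zero_le_one).1
        (intervalIntegral.intervalIntegrable_rpow' (by linarith))
    apply Integrable.mono' hdom hmeas.restrict
    filter_upwards [ae_restrict_mem measurableSet_Ioc] with x hx
    have hx0 : (0:ℝ) < x := hx.1
    have h1 : (1+x) ^ (-(p+q)) ≤ 1 :=
      Real.rpow_le_one_of_one_le_of_nonpos (by linarith) (by linarith)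
    have h2 : (0:ℝ) ≤ x ^ (p-1) := Real.rpow_nonneg hx0.le _
    have h3 : (0:ℝ) ≤ (1+x) ^ (-(p+q)) := Real.rpow_nonneg (by linarith) _
    rw [Real.norm_eq_abs, abs_of_nonneg (mul_nonneg h2 h3)]
    calc x ^ (p-1) * (1+x) ^ (-(p+q)) ≤ x ^ (p-1) * 1 := by
          exact mul_le_mul_of_nonneg_left h1 h2
      _ = x ^ (p-1) := mul_one _
  · have hdom : IntegrableOn (fun x : ℝ => x ^ (-(1+q))) (Ioi (1:ℝ)) :=
      integrableOn_Ioi_rpow_of_lt (by linarith) one_pos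
    apply Integrable.mono' hdom hmeas.restrict
    filter_upwards [ae_restrict_mem measurableSet_Ioi] with x hx
    have hx0 : (0:ℝ) < x := lt_trans one_pos hx
    have h2 : (0:ℝ) ≤ x ^ (p-1) := Real.rpow_nonneg hx0.le _
    have h3 : (0:ℝ) ≤ (1+x) ^ (-(p+q)) := Real.rpow_nonneg (by linarith) _
    rw [Real.norm_eq_abs, abs_of_nonneg (mul_nonneg h2 h3)]
    have h1 : (1+x) ^ (-(p+q)) ≤ x ^ (-(p+q)) :=
      Real.rpow_le_rpow_of_nonpos hx0 (by linarith) (by linarith)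
    calc x ^ (p-1) * (1+x) ^ (-(p+q)) ≤ x ^ (p-1) * x ^ (-(p+q)) :=
          mul_le_mul_of_nonneg_left h1 h2
      _ = x ^ (-(1+q)) := by
          rw [← Real.rpow_add hx0]; ring_nf


lemma J_val {p q : ℝ} (hp : 0 < p) (hq : 0 < q) :
    ∫ x in Ioi (0:ℝ), x ^ (p-1) * (1+x) ^ (-(p+q))
      = Real.Gamma p * Real.Gamma q / Real.Gamma (p+q) := by
  have himg : (fun t : ℝ => t / (1-t)) '' Ioo 0 1 = Ioi 0 := by
    ext x
    constructor
    · rintro ⟨t, ⟨ht0, ht1⟩, rfl⟩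
      exact div_pos ht0 (by linarith)
    · intro hx
      have hx0 : (0:ℝ) < x := hx
      refine ⟨x / (1+x), ⟨div_pos hx0 (by linarith), (div_lt_one (by linarith)).2 (by linarith)⟩, ?_⟩
      have h1 : 1 - x/(1+x) = 1/(1+x) := by field_simp; ring
      show x/(1+x) / (1 - x/(1+x)) = x
      rw [h1]
      field_simp
  have hderiv : ∀ t ∈ Ioo (0:ℝ) 1,
      HasDerivWithinAt (fun t : ℝ => t / (1-t)) (((1-t)^2)⁻¹) (Ioo 0 1) t := by
    intro t ht
    have hne : (1 - t) ≠ 0 := sub_ne_zero.mpr (by linarith [ht.2] : (1:ℝ) ≠ t)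
    have := (hasDerivAt_id t).div ((hasDerivAt_id t).const_sub 1) hne
    refine (this.congr_deriv ?_).hasDerivWithinAt
    simp only [id]
    field_simp
    ring
  have hinj : InjOn (fun t : ℝ => t / (1-t)) (Ioo 0 1) := by
    intro t1 h1 t2 h2 he
    have hne1 : (1:ℝ) - t1 ≠ 0 := sub_ne_zero.mpr (by linarith [h1.2] : (1:ℝ) ≠ t1)
    have hne2 : (1:ℝ) - t2 ≠ 0 := sub_ne_zero.mpr (by linarith [h2.2] : (1:ℝ) ≠ t2)
    field_simp at he
    nlinarith [he]
  rw [← himg, integral_image_eq_integral_abs_deriv_smul measurableSet_Ioo hderiv hinj,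
    ← betaReal_val hp hq]
  apply setIntegral_congr_fun measurableSet_Ioo
  intro t ht
  have ht0 : (0:ℝ) < t := ht.1
  have hu : (0:ℝ) < 1 - t := by linarith [ht.2]
  have h1 : (1:ℝ) + t/(1-t) = (1-t)⁻¹ := by field_simp; ring
  have h2 : (t/(1-t)) ^ (p-1) = t ^ (p-1) * ((1-t) ^ (p-1))⁻¹ := by
    rw [Real.div_rpow ht0.le hu.le, div_eq_mul_inv]
  dsimp only
  have e2 : (((1-t:ℝ))^(2:ℕ))⁻¹ = (1-t) ^ (-2:ℝ) := by
    rw [← Real.rpow_natCast (1-t) 2, ← Real.rpow_neg hu.le]; norm_num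
  have e3 : (((1-t:ℝ)) ^ (p-1))⁻¹ = (1-t) ^ (-(p-1)) := by rw [← Real.rpow_neg hu.le]
  have e4 : (((1-t:ℝ))⁻¹) ^ (-(p+q)) = (1-t) ^ (p+q) := by
    rw [Real.inv_rpow hu.le, ← Real.rpow_neg hu.le, neg_neg]
  rw [smul_eq_mul, h1, h2, abs_of_nonneg (by positivity), e2, e3, e4]
  calc (1-t:ℝ) ^ (-2:ℝ) * (t ^ (p-1) * (1-t) ^ (-(p-1)) * (1-t) ^ (p+q))
      = t^(p-1) * ((1-t)^(-2:ℝ) * ((1-t)^(-(p-1)) * (1-t)^(p+q))) := by ring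
    _ = t^(p-1) * (1-t)^(q-1) := by
        rw [← Real.rpow_add hu, ← Real.rpow_add hu]; congr 1; ring


-- G u = u^β * (1-u) * (1+u)^(-3)
lemma K_split {β : ℝ} (u : ℝ) (hu : 0 < u) :
    u ^ β * (1-u) * (1+u) ^ (-(3:ℝ))
      = 2 * (u ^ ((β+1)-1) * (1+u) ^ (-((β+1)+(2-β))))
        - u ^ ((β+1)-1) * (1+u) ^ (-((β+1)+(1-β))) := by
  have h1 : (0:ℝ) < 1 + u := by linarith
  have e1 : -((β+1)+(2-β)) = (-3:ℝ) := by ring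
  have e2 : -((β+1)+(1-β)) = (-2:ℝ) := by ring
  have e3 : (β+1)-1 = β := by ring
  rw [e1, e2, e3]
  have e4 : (1+u) ^ (-2:ℝ) = (1+u) ^ (-3:ℝ) * (1+u) := by
    rw [show (-2:ℝ) = -3 + 1 by norm_num, Real.rpow_add h1, Real.rpow_one]
  rw [e4]
  ring

lemma K_integrable {β : ℝ} (h0 : 0 < β) (h1 : β < 1) :
    IntegrableOn (fun u : ℝ => u ^ β * (1-u) * (1+u) ^ (-(3:ℝ))) (Ioi 0) := by
  have hJ1 := J_int (p := β+1) (q := 2-β) (by linarith) (by linarith)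
  have hJ2 := J_int (p := β+1) (q := 1-β) (by linarith) (by linarith)
  apply Integrable.congr ((hJ1.const_mul 2).sub hJ2)
  filter_upwards [ae_restrict_mem measurableSet_Ioi] with u hu
  exact (K_split u hu).symm

lemma K_val {β : ℝ} (h0 : 0 < β) (h1 : β < 1) :
    ∫ u in Ioi (0:ℝ), u ^ β * (1-u) * (1+u) ^ (-(3:ℝ))
      = -(β^2) * (π / Real.sin (π * β)) := by
  have hJ1 := J_int (p := β+1) (q := 2-β) (by linarith) (by linarith)
  have hJ2 := J_int (p := β+1) (q := 1-β) (by linarith) (by linarith)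
  have hsplit : ∫ u in Ioi (0:ℝ), u ^ β * (1-u) * (1+u) ^ (-(3:ℝ))
      = 2 * (∫ u in Ioi (0:ℝ), u ^ ((β+1)-1) * (1+u) ^ (-((β+1)+(2-β))))
        - ∫ u in Ioi (0:ℝ), u ^ ((β+1)-1) * (1+u) ^ (-((β+1)+(1-β))) := by
    rw [← integral_const_mul, ← integral_sub (hJ1.const_mul 2) hJ2]
    apply setIntegral_congr_fun measurableSet_Ioi
    intro u hu
    exact K_split u hu
  rw [hsplit, J_val (by linarith) (by linarith), J_val (by linarith) (by linarith)]
  have g3 : Real.Gamma ((β+1)+(2-β)) = 2 := by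
    rw [show (β+1)+(2-β) = (2:ℝ)+1 by ring, Real.Gamma_add_one (by norm_num),
      show (2:ℝ) = 1 + 1 by norm_num, Real.Gamma_add_one (by norm_num), Real.Gamma_one]
    norm_num
  have g2 : Real.Gamma ((β+1)+(1-β)) = 1 := by
    rw [show (β+1)+(1-β) = (1:ℝ)+1 by ring, Real.Gamma_add_one (by norm_num), Real.Gamma_one]
    norm_num
  have gb1 : Real.Gamma (β+1) = β * Real.Gamma β := Real.Gamma_add_one (ne_of_gt h0)
  have gb2 : Real.Gamma (2-β) = (1-β) * Real.Gamma (1-β) := by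
    rw [show (2:ℝ)-β = (1-β) + 1 by ring, Real.Gamma_add_one (by linarith)]
  have hrefl : Real.Gamma β * Real.Gamma (1-β) = π / Real.sin (π * β) :=
    Real.Gamma_mul_Gamma_one_sub β
  rw [g3, g2, gb1, gb2, ← hrefl]
  ring


-- Step: scaling.  a > 0.
lemma scale_val {a β : ℝ} (ha : 0 < a) (h0 : 0 < β) (h1 : β < 1) :
    ∫ x in Ioi (0:ℝ), x ^ β * (1-a*x) * (1+a*x) ^ (-(3:ℝ))
      = a ^ (-β) * (a⁻¹ * ∫ u in Ioi (0:ℝ), u ^ β * (1-u) * (1+u) ^ (-(3:ℝ))) := by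
  have hs := integral_comp_mul_left_Ioi
    (fun u : ℝ => u ^ β * (1-u) * (1+u) ^ (-(3:ℝ))) 0 ha
  rw [mul_zero] at hs
  rw [smul_eq_mul] at hs
  rw [← hs, ← integral_const_mul]
  apply setIntegral_congr_fun measurableSet_Ioi
  intro x hx
  have hx0 : (0:ℝ) < x := hx
  dsimp only
  rw [Real.mul_rpow ha.le hx0.le, Real.rpow_neg ha.le]
  field_simp [(Real.rpow_pos_of_pos ha β).ne']

-- rpow substitution: c = 2+2α, β = 1/(1+α)
lemma rpow_step {a α : ℝ} (hα : 0 < α) (ha : 0 < a) :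
    ∫ r in Ioi (0:ℝ),
        ((2+2*α) * r ^ ((2+2*α)-1)) • ((fun y : ℝ =>
          y ^ ((1:ℝ)/(1+α)) * (1-a*y) * (1+a*y) ^ (-(3:ℝ))) (r ^ (2+2*α)))
      = ∫ x in Ioi (0:ℝ), x ^ ((1:ℝ)/(1+α)) * (1-a*x) * (1+a*x) ^ (-(3:ℝ)) :=
  integral_comp_rpow_Ioi_of_pos (g := fun y : ℝ =>
    y ^ ((1:ℝ)/(1+α)) * (1-a*y) * (1+a*y) ^ (-(3:ℝ))) (p := 2+2*α) (by linarith)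

lemma pointwise_step {a α : ℝ} (hα : 0 < α) (ha : 0 < a) {r : ℝ} (hr : 0 < r) :
    (r : ℝ) ^ (1:ℕ) • (r ^ (2+2*α) / 4 * Real.exp (-2 * Real.log (1 + a * r ^ (2*α+2)))
        * ((1 - a * r ^ (2*α+2)) / (1 + a * r ^ (2*α+2))))
      = (4*(2+2*α))⁻¹ * (((2+2*α) * r ^ ((2+2*α)-1)) • ((fun y : ℝ =>
          y ^ ((1:ℝ)/(1+α)) * (1-a*y) * (1+a*y) ^ (-(3:ℝ))) (r ^ (2+2*α)))) := by
  have h1α : (0:ℝ) < 1 + α := by linarith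
  have hee : (2:ℝ) + 2*α = 2*α+2 := by ring
  set c : ℝ := 2*α+2 with hc
  set X : ℝ := 1 + a * r ^ c with hX
  have hXpos : 0 < X := by
    have : (0:ℝ) < r ^ c := Real.rpow_pos_of_pos hr c
    positivity
  have hexp : Real.exp (-2 * Real.log X) = X ^ (-2:ℝ) := by
    rw [Real.rpow_def_of_pos hXpos, mul_comm]
  have hXinv : X⁻¹ = X ^ (-1:ℝ) := (Real.rpow_neg_one X).symm
  have hX3 : X ^ (-2:ℝ) * X ^ (-1:ℝ) = X ^ (-(3:ℝ)) := by
    rw [← Real.rpow_add hXpos]; norm_num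
  have hr2 : (r ^ c) ^ ((1:ℝ)/(1+α)) = r ^ (2:ℝ) := by
    rw [← Real.rpow_mul hr.le]
    congr 1
    field_simp [hc]
    ring
  have hrc1 : r ^ (c-1) * r ^ (2:ℝ) = r ^ (c+1) := by
    rw [← Real.rpow_add hr]; congr 1; ring
  have hrc2 : r * r ^ c = r ^ (c+1) := by
    nth_rewrite 1 [← Real.rpow_one r]
    rw [← Real.rpow_add hr]; congr 1; ring
  rw [hee, smul_eq_mul, smul_eq_mul]
  dsimp only
  rw [hexp, hr2, div_eq_mul_inv (1 - a * r ^ c), hXinv]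
  rw [pow_one]
  calc r * (r ^ c / 4 * X ^ (-2:ℝ) * ((1 - a * r ^ c) * X ^ (-1:ℝ)))
      = (r * r ^ c) * (1 - a * r ^ c) * (X ^ (-2:ℝ) * X ^ (-1:ℝ)) / 4 := by ring
    _ = r ^ (c+1) * (1 - a * r ^ c) * X ^ (-(3:ℝ)) / 4 := by rw [hrc2, hX3]
    _ = (4*(c))⁻¹ * ((c) * (r ^ (c-1) * r ^ (2:ℝ)) * ((1 - a * r ^ c) * X ^ (-(3:ℝ)))) := by
        rw [hrc1]
        have hcne : (c:ℝ) ≠ 0 := by positivity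
        field_simp
    _ = (4*(c))⁻¹ * ((c) * r ^ (c-1) * (r ^ (2:ℝ) * (1 - a * r ^ c) * X ^ (-(3:ℝ)))) := by
        ring


lemma hball2 : (volume (ball (0:R2) 1)).toReal = π := by
  rw [EuclideanSpace.volume_ball]
  rw [show ((Fintype.card (Fin 2) : ℝ) / 2 + 1 : ℝ) = 1 + 1 by norm_num [Fintype.card_fin]]
  rw [Real.Gamma_add_one one_ne_zero, Real.Gamma_one]
  simp [Real.sq_sqrt Real.pi_pos.le, Real.pi_pos.le]

theorem value_part (α V0 : ℝ) (hα : 0 < α) (hV0 : 0 < V0) :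
    (∫ y : R2, ‖y‖ ^ (2 + 2 * α) / 4 * Real.exp (U2 α V0 y) * f2 α V0 y)
        = 2 * π * Lam1 α V0 := by
  have h1α : (0:ℝ) < 1 + α := by linarith
  set a : ℝ := aconst α V0 with ha_def
  have ha : 0 < a := by
    rw [ha_def, aconst]; positivity
  set β : ℝ := (1:ℝ)/(1+α) with hβ_def
  have hβ0 : 0 < β := by positivity
  have hβ1 : β < 1 := by
    rw [hβ_def, div_lt_one h1α]; linarith
  set g₀ : ℝ → ℝ := fun r => r ^ (2+2*α) / 4
      * Real.exp (-2 * Real.log (1 + a * r ^ (2*α+2)))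
      * ((1 - a * r ^ (2*α+2)) / (1 + a * r ^ (2*α+2))) with hg₀
  have hint : (∫ y : R2, ‖y‖ ^ (2 + 2 * α) / 4 * Real.exp (U2 α V0 y) * f2 α V0 y)
      = ∫ y : R2, g₀ ‖y‖ := by
    simp only [U2, f2, hg₀, ← ha_def]
  rw [hint, MeasureTheory.integral_fun_norm_addHaar volume g₀, measureReal_def, hball2,
    finrank_euclideanSpace_fin]
  have hIoi : ∫ r in Ioi (0:ℝ), r ^ (2-1 : ℕ) • g₀ r
      = (4*(2+2*α))⁻¹ * (a ^ (-β) * (a⁻¹ *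
          (-(β^2) * (π / Real.sin (π * β))))) := by
    rw [← K_val hβ0 hβ1, ← scale_val ha hβ0 hβ1, ← rpow_step hα ha, ← integral_const_mul]
    apply setIntegral_congr_fun measurableSet_Ioi
    intro r hr
    simpa only [hg₀] using pointwise_step (a := a) hα ha (hr : (0:ℝ) < r)
  rw [hIoi]
  have hsin : Real.sin (π / (1+α)) ≠ 0 := by
    apply ne_of_gt
    apply Real.sin_pos_of_pos_of_lt_pi
    · positivity
    · rw [div_lt_iff₀ h1α]
      nlinarith [Real.pi_pos]
  have hainv : a⁻¹ = 8 * (1 + α) ^ 2 / V0 := by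
    rw [ha_def, aconst, inv_div]
  have hAβ : a ^ (-β) = (8 * (1 + α) ^ 2 / V0) ^ β := by
    rw [Real.rpow_neg ha.le, ← Real.inv_rpow ha.le, hainv]
  have hsineq : Real.sin (π * β) = Real.sin (π / (1+α)) := by
    rw [hβ_def, mul_one_div]
  rw [nsmul_eq_mul, smul_eq_mul, hAβ, hainv, hsineq, Lam1,
    show ((1:ℝ)/(1+α)) = β from hβ_def.symm]
  rw [hβ_def]
  field_simp
  ring

lemma int_part (α V0 : ℝ) (hα : 0 < α) (hV0 : 0 < V0) :
    Integrable (fun y : R2 => ‖y‖ ^ (2 + 2 * α) / 4 * Real.exp (U2 α V0 y) * f2 α V0 y) := by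
  have h1α : (0:ℝ) < 1 + α := by linarith
  set a : ℝ := aconst α V0 with ha_def
  have ha : 0 < a := by rw [ha_def, aconst]; positivity
  set c : ℝ := 2 + 2*α with hc_def
  have hc0 : (0:ℝ) < c := by rw [hc_def]; linarith
  have hm : (0:ℝ) < min 1 a := lt_min one_pos ha
  set C : ℝ := (4*a)⁻¹ * ((min 1 a)⁻¹ * 2 ^ c) with hC_def
  have hdim : ((Module.finrank ℝ R2 : ℕ) : ℝ) < c := by
    rw [finrank_euclideanSpace_fin, hc_def]; norm_num; linarith
  apply Integrable.mono' ((integrable_one_add_norm (E := R2) hdim).const_mul C)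
  · apply Measurable.aestronglyMeasurable
    simp only [U2, f2, ← ha_def]
    have m1 : Measurable (fun y : R2 => ‖y‖) := measurable_norm
    have m2 : Measurable (fun y : R2 => ‖y‖ ^ (2*α+2)) := by fun_prop
    have m2' : Measurable (fun y : R2 => ‖y‖ ^ (2+2*α)) := by fun_prop
    have m3 : Measurable (fun y : R2 => 1 + a * ‖y‖ ^ (2*α+2)) :=
      measurable_const.add (m2.const_mul a)
    have m4 : Measurable (fun y : R2 => 1 - a * ‖y‖ ^ (2*α+2)) :=
      measurable_const.sub (m2.const_mul a)
    exact ((m2'.div_const 4).mul ((m3.log.const_mul (-2)).exp)).mul (m4.div m3)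
  · filter_upwards with y
    set r : ℝ := ‖y‖ with hr_def
    have hr0 : 0 ≤ r := norm_nonneg y
    set t : ℝ := r ^ (2*α+2) with ht_def
    have ht0 : 0 ≤ t := Real.rpow_nonneg hr0 _
    set X : ℝ := 1 + a * t with hX_def
    have hX1 : (1:ℝ) ≤ X := by
      have : 0 ≤ a * t := mul_nonneg ha.le ht0
      rw [hX_def]; linarith
    have hXpos : (0:ℝ) < X := lt_of_lt_of_le one_pos hX1
    -- rewrite the function value
    have hval : ‖y‖ ^ (2 + 2 * α) / 4 * Real.exp (U2 α V0 y) * f2 α V0 y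
        = t/4 * (X ^ (-2:ℝ)) * ((1 - a*t)/X) := by
      simp only [U2, f2, ← ha_def, ← hr_def, ← ht_def, ← hX_def]
      rw [show (2:ℝ) + 2*α = 2*α + 2 by ring, ← ht_def]
      congr 1
      congr 1
      rw [Real.rpow_def_of_pos hXpos, mul_comm]
    rw [hval]
    -- bound
    have hfrac : |(1 - a*t)/X| ≤ 1 := by
      rw [abs_div, abs_of_pos hXpos, div_le_one hXpos]
      have h1 : 0 ≤ a*t := mul_nonneg ha.le ht0
      rw [abs_le]; constructor <;> [skip; skip] <;> rw [hX_def] <;> linarith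
    have hX2 : X ^ (-2:ℝ) = X⁻¹ * X⁻¹ := by
      rw [show (-2:ℝ) = (-1) + (-1) by norm_num, Real.rpow_add hXpos,
        Real.rpow_neg_one]
    have step1 : ‖t/4 * (X ^ (-2:ℝ)) * ((1 - a*t)/X)‖ ≤ t/4 * (X⁻¹ * X⁻¹) := by
      rw [norm_mul, norm_mul, Real.norm_eq_abs, Real.norm_eq_abs, Real.norm_eq_abs,
        abs_of_nonneg (by positivity : (0:ℝ) ≤ t/4),
        abs_of_nonneg (Real.rpow_nonneg hXpos.le _), hX2]
      calc t/4 * (X⁻¹ * X⁻¹) * |(1 - a*t)/X| ≤ t/4 * (X⁻¹ * X⁻¹) * 1 := by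
            apply mul_le_mul_of_nonneg_left hfrac; positivity
        _ = t/4 * (X⁻¹ * X⁻¹) := mul_one _
    have step2 : t/4 * (X⁻¹ * X⁻¹) ≤ (4*a)⁻¹ * X⁻¹ := by
      have h1' : t ≤ X/a := (le_div_iff₀ ha).2 (by rw [hX_def]; linarith)
      have h1 : t * X⁻¹ ≤ a⁻¹ := by
        calc t * X⁻¹ ≤ (X/a) * X⁻¹ := mul_le_mul_of_nonneg_right h1' (inv_nonneg.2 hXpos.le)
          _ = a⁻¹ := by field_simp [mul_comm]
      have h2 := mul_le_mul_of_nonneg_right h1 (inv_nonneg.2 hXpos.le)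
      calc t/4 * (X⁻¹ * X⁻¹) = (t * X⁻¹) * X⁻¹/4 := by ring
        _ ≤ a⁻¹ * X⁻¹/4 := by linarith
        _ = (4*a)⁻¹ * X⁻¹ := by rw [mul_inv]; ring
    have step3 : X⁻¹ ≤ (min 1 a)⁻¹ * (1+t)⁻¹ := by
      have hle : min 1 a * (1+t) ≤ X := by
        have e1 : min 1 a ≤ 1 := min_le_left _ _
        have e2 : min 1 a * t ≤ a * t := mul_le_mul_of_nonneg_right (min_le_right _ _) ht0
        rw [hX_def]; nlinarith
      calc X⁻¹ ≤ (min 1 a * (1+t))⁻¹ := by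
            apply inv_anti₀ (by positivity) hle
        _ = (min 1 a)⁻¹ * (1+t)⁻¹ := by rw [mul_inv]
    have step4 : (1+t)⁻¹ ≤ 2 ^ c * ((1+r) ^ c)⁻¹ := by
      have key : (1+r) ^ c ≤ 2 ^ c * (1+t) := by
        have e1 : (1+r) ^ c ≤ (2 * max 1 r) ^ c := by
          apply Real.rpow_le_rpow (by linarith) _ hc0.le
          rcases le_total r 1 with h | h
          · rw [max_eq_left h]; linarith
          · rw [max_eq_right h]; linarith
        have e2 : (2 * max 1 r) ^ c = 2 ^ c * (max 1 r) ^ c :=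
          Real.mul_rpow (by norm_num) (le_max_of_le_left zero_le_one)
        have e3 : (max 1 r) ^ c ≤ 1 + t := by
          rcases le_total r 1 with h | h
          · rw [max_eq_left h, Real.one_rpow]; linarith
          · rw [max_eq_right h, hc_def, show (2:ℝ) + 2*α = 2*α+2 by ring, ← ht_def]
            linarith
        calc (1+r) ^ c ≤ 2 ^ c * (max 1 r) ^ c := by rw [← e2]; exact e1
          _ ≤ 2 ^ c * (1+t) := by
              apply mul_le_mul_of_nonneg_left e3 (by positivity)
      rw [← div_le_iff₀' (by positivity : (0:ℝ) < 2 ^ c)] at key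
      calc (1+t)⁻¹ ≤ ((1+r) ^ c / 2 ^ c)⁻¹ := by
            apply inv_anti₀ (by positivity) key
        _ = 2 ^ c * ((1+r) ^ c)⁻¹ := by rw [inv_div, div_eq_mul_inv]
    calc ‖t/4 * (X ^ (-2:ℝ)) * ((1 - a*t)/X)‖ ≤ t/4 * (X⁻¹ * X⁻¹) := step1
      _ ≤ (4*a)⁻¹ * X⁻¹ := step2
      _ ≤ (4*a)⁻¹ * ((min 1 a)⁻¹ * (1+t)⁻¹) := by
          apply mul_le_mul_of_nonneg_left step3 (by positivity)
      _ ≤ (4*a)⁻¹ * ((min 1 a)⁻¹ * (2 ^ c * ((1+r) ^ c)⁻¹)) := by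
          apply mul_le_mul_of_nonneg_left _ (by positivity)
          apply mul_le_mul_of_nonneg_left step4 (by positivity)
      _ = C * (1 + ‖y‖) ^ (-c) := by
          rw [hC_def, ← hr_def, Real.rpow_neg (by linarith)]
          ring

end Aux

/-- `∫_{ℝ²} (|y|^{2+2α}/4) e^{U} f dy = 2π Λ₁`. -/
theorem integral_Lam1 (α V0 : ℝ) (hα : 0 < α) (hα_notnat : ∀ n : ℕ, α ≠ (n : ℝ))
    (hV0 : 0 < V0) :
    Integrable (fun y : R2 => ‖y‖ ^ (2 + 2 * α) / 4 * Real.exp (U2 α V0 y) * f2 α V0 y)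
    ∧ (∫ y : R2, ‖y‖ ^ (2 + 2 * α) / 4 * Real.exp (U2 α V0 y) * f2 α V0 y)
        = 2 * π * Lam1 α V0 := by
  exact ⟨int_part α V0 hα hV0, value_part α V0 hα hV0⟩
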